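/- Let α and β be order automorphisms of (E, E₊) such that the first component of α(r, x, y) equals 5r for all (r, x, y) ∈ E, and the first component of β(r, x, y) equals (2 + √3)r for all (r, x, y) ∈ E. Then α ∘ β ≠ β ∘ α. -/

import Mathlib

/-- The additive subgroup `E` of `ℝ × ℤ × ℤ`: all triples `(r, x, y)` such that
`r = (j + k√3)/5^(6i)`, `x ≡ j (mod 9)` and `y ≡ k (mod 3)` for some integers `i, j, k`. -/
def Eset : Set (ℝ × ℤ × ℤ) :=
  {p | ∃ i j k : ℤ, p.1 = ((j : ℝ) + (k : ℝ) * Real.sqrt 3) / (5 : ℝ) ^ (6 * i) ∧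
    p.2.1 ≡ j [ZMOD 9] ∧ p.2.2 ≡ k [ZMOD 3]}

/-- The positive cone `E₊ = {(r, x, y) ∈ E : r > 0} ∪ {(0, 0, 0)}`. -/
def Epos : Set (ℝ × ℤ × ℤ) :=
  {p | p ∈ Eset ∧ 0 < p.1} ∪ {0}

/-- An order automorphism of `(E, E₊)`: an additive group automorphism of `E`
(a bijection of `E` onto itself which is additive on `E`) with `φ(E₊) = E₊`. -/
structure IsOrderAuto (φ : ℝ × ℤ × ℤ → ℝ × ℤ × ℤ) : Prop where
  bijOn : Set.BijOn φ Eset Eset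
  addOn : ∀ p ∈ Eset, ∀ q ∈ Eset, φ (p + q) = φ p + φ q
  posEq : φ '' Epos = Epos

lemma pow56_9 : (5:ℤ)^6 ≡ 1 [ZMOD 9] := by decide
lemma pow56_3 : (5:ℤ)^6 ≡ 1 [ZMOD 3] := by decide

lemma pow5_mod9 (s : ℕ) : (5:ℤ)^(6*s) ≡ 1 [ZMOD 9] := by
  rw [pow_mul]; simpa using pow56_9.pow s

lemma pow5_mod3 (s : ℕ) : (5:ℤ)^(6*s) ≡ 1 [ZMOD 3] := by
  rw [pow_mul]; simpa using pow56_3.pow s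

lemma irr3 : Irrational (Real.sqrt 3) := (Nat.prime_three).irrational_sqrt

lemma lin_indep {a b c d : ℤ}
    (h : (a:ℝ) + (b:ℝ) * Real.sqrt 3 = (c:ℝ) + (d:ℝ) * Real.sqrt 3) :
    a = c ∧ b = d := by
  rcases eq_or_ne b d with hbd | hbd
  · subst hbd
    have : (a:ℝ) = c := by linarith
    exact ⟨by exact_mod_cast this, rfl⟩
  · exfalso
    have hne : ((d:ℝ) - (b:ℝ)) ≠ 0 := by
      intro h0
      exact hbd (by exact_mod_cast (by linarith : (b:ℝ) = d))
    have hs : Real.sqrt 3 = ((a:ℝ) - c) / ((d:ℝ) - b) := by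
      field_simp
      linarith
    exact irr3 ⟨((a - c : ℤ) : ℚ)/((d - b : ℤ) : ℚ), by rw [hs]; push_cast; ring⟩

lemma mem_E {r : ℝ} (i J K : ℤ) {x y : ℤ}
    (hr : r = ((J:ℝ) + (K:ℝ) * Real.sqrt 3) / (5:ℝ) ^ (6*i))
    (hx : x ≡ J [ZMOD 9]) (hy : y ≡ K [ZMOD 3]) : ((r, x, y) : ℝ×ℤ×ℤ) ∈ Eset :=
  ⟨i, J, K, hr, hx, hy⟩

lemma pow_split {i1 i2 : ℤ} (hle : i1 ≤ i2) :
    (5:ℝ)^(6*i2) = (5:ℝ)^(6*i1) * (5:ℝ)^(6*(i2 - i1).toNat) := by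
  rw [← zpow_natCast (5:ℝ) (6*(i2-i1).toNat), ← zpow_add₀ (by norm_num : (5:ℝ) ≠ 0)]
  congr 1
  push_cast [Int.toNat_of_nonneg (by omega : (0:ℤ) ≤ i2 - i1)]
  ring

lemma cancel_pow {i1 i2 : ℤ} (hle : i1 ≤ i2) {u v : ℝ}
    (h : u / (5:ℝ)^(6*i1) = v / (5:ℝ)^(6*i2)) :
    u * (5:ℝ)^(6*(i2-i1).toNat) = v := by
  have hne1 : (5:ℝ)^(6*i1) ≠ 0 := zpow_ne_zero _ (by norm_num)
  have hne2 : (5:ℝ)^(6*i2) ≠ 0 := zpow_ne_zero _ (by norm_num)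
  rw [div_eq_div_iff hne1 hne2, pow_split hle] at h
  apply mul_right_cancel₀ hne1
  linear_combination h

lemma decode {x y : ℤ} (i0 J K : ℤ) {r : ℝ}
    (hr : r = ((J:ℝ) + (K:ℝ) * Real.sqrt 3) / (5:ℝ) ^ (6*i0))
    (h : ((r, x, y) : ℝ×ℤ×ℤ) ∈ Eset) : x ≡ J [ZMOD 9] ∧ y ≡ K [ZMOD 3] := by
  obtain ⟨i, j, k, h1, hx, hy⟩ := h
  have key0 : ((J:ℝ) + (K:ℝ) * Real.sqrt 3) / (5:ℝ) ^ (6*i0)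
      = ((j:ℝ) + (k:ℝ) * Real.sqrt 3) / (5:ℝ) ^ (6*i) := by
    rw [← hr]; exact h1
  rcases le_total i0 i with hle | hle
  · have key := cancel_pow hle key0
    obtain ⟨hj, hk⟩ := lin_indep (a := J*5^(6*(i-i0).toNat)) (b := K*5^(6*(i-i0).toNat))
      (c := j) (d := k) (by push_cast; linear_combination key)
    constructor
    · have hJ : (J*5^(6*(i-i0).toNat) : ℤ) ≡ J [ZMOD 9] := by
        simpa using (pow5_mod9 ((i-i0).toNat)).mul_left J
      exact hx.trans (hj ▸ hJ)
    · have hK : (K*5^(6*(i-i0).toNat) : ℤ) ≡ K [ZMOD 3] := by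
        simpa using (pow5_mod3 ((i-i0).toNat)).mul_left K
      exact hy.trans (hk ▸ hK)
  · have key := cancel_pow hle key0.symm
    obtain ⟨hj, hk⟩ := lin_indep (a := j*5^(6*(i0-i).toNat)) (b := k*5^(6*(i0-i).toNat))
      (c := J) (d := K) (by push_cast; linear_combination key)
    constructor
    · have hJ : (j*5^(6*(i0-i).toNat) : ℤ) ≡ j [ZMOD 9] := by
        simpa using (pow5_mod9 ((i0-i).toNat)).mul_left j
      exact hx.trans (hj ▸ hJ).symm
    · have hK : (k*5^(6*(i0-i).toNat) : ℤ) ≡ k [ZMOD 3] := by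
        simpa using (pow5_mod3 ((i0-i).toNat)).mul_left k
      exact hy.trans (hk ▸ hK).symm

lemma zero_mem_E : (0 : ℝ×ℤ×ℤ) ∈ Eset :=
  ⟨0, 0, 0, by norm_num, Int.ModEq.refl 0, Int.ModEq.refl 0⟩

lemma neg_mem_E {p : ℝ×ℤ×ℤ} (hp : p ∈ Eset) : -p ∈ Eset := by
  obtain ⟨i, j, k, h1, hx, hy⟩ := hp
  refine ⟨i, -j, -k, ?_, ?_, ?_⟩
  · show -p.1 = _
    rw [h1]; push_cast; ring
  · show -p.2.1 ≡ _ [ZMOD 9]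
    exact hx.neg
  · show -p.2.2 ≡ _ [ZMOD 3]
    exact hy.neg

lemma add_mem_E {p q : ℝ×ℤ×ℤ} (hp : p ∈ Eset) (hq : q ∈ Eset) : p + q ∈ Eset := by
  obtain ⟨i1, j1, k1, h1, hx1, hy1⟩ := hp
  obtain ⟨i2, j2, k2, h2, hx2, hy2⟩ := hq
  set m := max i1 i2 with hm
  set s1 : ℕ := (m - i1).toNat with hs1
  set s2 : ℕ := (m - i2).toNat with hs2
  have e1 : (5:ℝ)^(6*m) = (5:ℝ)^(6*i1) * (5:ℝ)^(6*s1) := pow_split (le_max_left _ _)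
  have e2 : (5:ℝ)^(6*m) = (5:ℝ)^(6*i2) * (5:ℝ)^(6*s2) := pow_split (le_max_right _ _)
  have hne1 : (5:ℝ)^(6*i1) ≠ 0 := zpow_ne_zero _ (by norm_num)
  have hne2 : (5:ℝ)^(6*i2) ≠ 0 := zpow_ne_zero _ (by norm_num)
  have hnem : (5:ℝ)^(6*m) ≠ 0 := zpow_ne_zero _ (by norm_num)
  refine ⟨m, j1*5^(6*s1) + j2*5^(6*s2), k1*5^(6*s1) + k2*5^(6*s2), ?_, ?_, ?_⟩
  · show p.1 + q.1 = _
    have r1 : ((j1:ℝ) + (k1:ℝ)*Real.sqrt 3)/(5:ℝ)^(6*i1)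
        = (((j1*5^(6*s1) : ℤ):ℝ) + ((k1*5^(6*s1) : ℤ):ℝ)*Real.sqrt 3)/(5:ℝ)^(6*m) := by
      rw [div_eq_div_iff hne1 hnem, e1]; push_cast; ring
    have r2 : ((j2:ℝ) + (k2:ℝ)*Real.sqrt 3)/(5:ℝ)^(6*i2)
        = (((j2*5^(6*s2) : ℤ):ℝ) + ((k2*5^(6*s2) : ℤ):ℝ)*Real.sqrt 3)/(5:ℝ)^(6*m) := by
      rw [div_eq_div_iff hne2 hnem, e2]; push_cast; ring
    rw [h1, h2, r1, r2, ← add_div]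
    congr 1
    push_cast
    ring
  · show p.2.1 + q.2.1 ≡ _ [ZMOD 9]
    have a1 : j1*5^(6*s1) ≡ j1 [ZMOD 9] := by simpa using (pow5_mod9 s1).mul_left j1
    have a2 : j2*5^(6*s2) ≡ j2 [ZMOD 9] := by simpa using (pow5_mod9 s2).mul_left j2
    exact (hx1.trans a1.symm).add (hx2.trans a2.symm)
  · show p.2.2 + q.2.2 ≡ _ [ZMOD 3]
    have a1 : k1*5^(6*s1) ≡ k1 [ZMOD 3] := by simpa using (pow5_mod3 s1).mul_left k1
    have a2 : k2*5^(6*s2) ≡ k2 [ZMOD 3] := by simpa using (pow5_mod3 s2).mul_left k2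
    exact (hy1.trans a1.symm).add (hy2.trans a2.symm)

def Egrp : AddSubgroup (ℝ×ℤ×ℤ) where
  carrier := Eset
  add_mem' := fun hp hq => add_mem_E hp hq
  zero_mem' := zero_mem_E
  neg_mem' := fun hp => neg_mem_E hp

lemma zsmul_mem_E {p : ℝ×ℤ×ℤ} (hp : p ∈ Eset) (k : ℤ) : k • p ∈ Eset :=
  Egrp.zsmul_mem hp k

section Phi
variable {φ : ℝ×ℤ×ℤ → ℝ×ℤ×ℤ}
  (hadd : ∀ p ∈ Eset, ∀ q ∈ Eset, φ (p + q) = φ p + φ q)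

include hadd

lemma phi_zero : φ 0 = 0 := by
  have h := hadd 0 zero_mem_E 0 zero_mem_E
  rw [add_zero] at h
  exact left_eq_add.mp h

lemma phi_neg {p : ℝ×ℤ×ℤ} (hp : p ∈ Eset) : φ (-p) = - φ p := by
  have h := hadd p hp (-p) (neg_mem_E hp)
  rw [add_neg_cancel, phi_zero hadd] at h
  exact (eq_neg_of_add_eq_zero_right h.symm)

lemma phi_zsmul : ∀ (k : ℤ) {p : ℝ×ℤ×ℤ}, p ∈ Eset → φ (k • p) = k • φ p := by
  have hnat : ∀ (n : ℕ) {p : ℝ×ℤ×ℤ}, p ∈ Eset → φ ((n:ℤ) • p) = (n:ℤ) • φ p := by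
    intro n
    induction n with
    | zero => intro p hp; simpa using phi_zero hadd
    | succ n ih =>
      intro p hp
      have e : ((n+1 : ℕ) : ℤ) • p = (n:ℤ) • p + p := by
        push_cast
        rw [add_smul, one_smul]
      rw [e, hadd _ (zsmul_mem_E hp _) _ hp, ih hp]
      push_cast
      rw [add_smul, one_smul]
  intro k p hp
  rcases le_or_gt 0 k with hk | hk
  · lift k to ℕ using hk
    exact hnat k hp
  · have hknat : k = -(((-k).toNat : ℕ) : ℤ) := by omega
    rw [hknat, neg_smul, neg_smul, phi_neg hadd (zsmul_mem_E hp _), hnat _ hp]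

end Phi

lemma geom (x : ℕ → ℤ) (D : ℤ) (h : ∀ n, x n = 15625 * x (n+1) + D) :
    15624 * x 0 + D = 0 := by
  have key : ∀ n, 15624 * x 0 + D = 15625^n * (15624 * x n + D) := by
    intro n
    induction n with
    | zero => simp
    | succ n ih => rw [ih, h n, pow_succ]; ring
  by_contra hne
  set M : ℤ := 15624 * x 0 + D with hM
  have habs : ∀ n : ℕ, (15625:ℤ)^n ≤ |M| := by
    intro n
    exact Int.le_of_dvd (abs_pos.mpr hne) ((dvd_abs _ _).mpr ⟨_, key n⟩)
  have h1 : |M| = (M.natAbs : ℤ) := by rw [Int.abs_eq_natAbs]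
  have h2 : (M.natAbs : ℤ) < (15625:ℤ)^(M.natAbs) := by
    have := Nat.lt_pow_self (n := M.natAbs) (by norm_num : 1 < 15625)
    exact_mod_cast this
  have h3 := habs M.natAbs
  rw [h1] at h3
  exact absurd h3 (not_le.mpr h2)

lemma n1_mem : (((0:ℝ),(9:ℤ),(0:ℤ)) : ℝ×ℤ×ℤ) ∈ Eset :=
  mem_E 0 0 0 (by norm_num) (by decide) (Int.ModEq.refl 0)

lemma n2_mem : (((0:ℝ),(0:ℤ),(3:ℤ)) : ℝ×ℤ×ℤ) ∈ Eset :=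
  mem_E 0 0 0 (by norm_num) (Int.ModEq.refl 0) (by decide)

lemma master {φ : ℝ×ℤ×ℤ → ℝ×ℤ×ℤ}
    (hadd : ∀ p ∈ Eset, ∀ q ∈ Eset, φ (p + q) = φ p + φ q)
    {A B C D : ℤ}
    (h1 : φ ((0:ℝ),(9:ℤ),(0:ℤ)) = ((0:ℝ), 9*A, 3*B))
    (h2 : φ ((0:ℝ),(0:ℤ),(3:ℤ)) = ((0:ℝ), 9*C, 3*D))
    (J K x y : ℤ) {r : ℝ} (hr : r = (J:ℝ) + (K:ℝ)*Real.sqrt 3)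
    (hx : x ≡ J [ZMOD 9]) (hy : y ≡ K [ZMOD 3]) :
    (φ (r, x, y)).2.1 = x*A + 3*(y*C) ∧
    3 * (φ (r, x, y)).2.2 = x*B + 3*(y*D) := by
  subst hr
  set q : ℕ → ℝ×ℤ×ℤ := fun n => ((((J:ℝ) + (K:ℝ)*Real.sqrt 3))/(5:ℝ)^(6*n), x, y) with hqdef
  have hq0 : q 0 = (((J:ℝ) + (K:ℝ)*Real.sqrt 3), x, y) := by
    simp [hqdef]
  have hqE : ∀ n, q n ∈ Eset := by
    intro n
    refine mem_E (n : ℤ) J K ?_ hx hy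
    show (((J:ℝ) + (K:ℝ)*Real.sqrt 3))/(5:ℝ)^(6*n) = _
    rw [show (6*(n:ℤ)) = ((6*n : ℕ) : ℤ) by push_cast; ring, zpow_natCast]
  have hrec : ∀ n, q n = (15625:ℤ) • q (n+1)
      + ((-1736*x) • (((0:ℝ),(9:ℤ),(0:ℤ)) : ℝ×ℤ×ℤ) + (-5208*y) • (((0:ℝ),(0:ℤ),(3:ℤ)) : ℝ×ℤ×ℤ)) := by
    intro n
    have h5 : (5:ℝ)^(6*(n+1)) = (5:ℝ)^(6*n) * 15625 := by
      rw [show 6*(n+1) = 6*n + 6 by ring, pow_add]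
      norm_num
    refine Prod.ext ?_ (Prod.ext ?_ ?_)
    · show (((J:ℝ) + (K:ℝ)*Real.sqrt 3))/(5:ℝ)^(6*n) = _
      have hne : (5:ℝ)^(6*n) ≠ 0 := pow_ne_zero _ (by norm_num)
      simp only [Prod.fst_add, Prod.smul_fst, hqdef]
      simp only [zsmul_eq_mul]
      push_cast
      rw [h5]
      field_simp
      ring
    · show x = _
      simp only [Prod.snd_add, Prod.fst_add, Prod.smul_snd, Prod.smul_fst, smul_eq_mul, hqdef]
      ring
    · show y = _
      simp only [Prod.snd_add, Prod.smul_snd, smul_eq_mul, hqdef]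
      ring
  have hstep : ∀ n, φ (q n) = (15625:ℤ) • φ (q (n+1))
      + ((-1736*x) • φ ((0:ℝ),(9:ℤ),(0:ℤ)) + (-5208*y) • φ ((0:ℝ),(0:ℤ),(3:ℤ))) := by
    intro n
    rw [hrec n,
      hadd _ (zsmul_mem_E (hqE (n+1)) _) _
        (add_mem_E (zsmul_mem_E n1_mem _) (zsmul_mem_E n2_mem _)),
      hadd _ (zsmul_mem_E n1_mem _) _ (zsmul_mem_E n2_mem _),
      phi_zsmul hadd _ (hqE (n+1)), phi_zsmul hadd _ n1_mem, phi_zsmul hadd _ n2_mem]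
  constructor
  · have hrecX : ∀ n, (fun n => (φ (q n)).2.1) n
        = 15625 * (fun n => (φ (q n)).2.1) (n+1) + (-15624*(x*A) - 46872*(y*C)) := by
      intro n
      have h := congrArg (fun z : ℝ×ℤ×ℤ => z.2.1) (hstep n)
      simp only [h1, h2, Prod.snd_add, Prod.fst_add, Prod.smul_snd, Prod.smul_fst,
        smul_eq_mul] at h
      show (φ (q n)).2.1 = 15625 * (φ (q (n+1))).2.1 + (-15624*(x*A) - 46872*(y*C))
      rw [h]; ring
    have h0 := geom _ _ hrecX
    simp only [hq0] at h0
    have := mul_left_cancel₀ (show (15624:ℤ) ≠ 0 by norm_num)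
      (show 15624 * ((φ (((J:ℝ) + (K:ℝ)*Real.sqrt 3), x, y)).2.1) = 15624 * (x*A + 3*(y*C)) by
        linear_combination h0)
    exact this
  · have hrecY : ∀ n, (fun n => (φ (q n)).2.2) n
        = 15625 * (fun n => (φ (q n)).2.2) (n+1) + (-5208*(x*B) - 15624*(y*D)) := by
      intro n
      have h := congrArg (fun z : ℝ×ℤ×ℤ => z.2.2) (hstep n)
      simp only [h1, h2, Prod.snd_add, Prod.smul_snd, smul_eq_mul] at h
      show (φ (q n)).2.2 = 15625 * (φ (q (n+1))).2.2 + (-5208*(x*B) - 15624*(y*D))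
      rw [h]; ring
    have h0 := geom _ _ hrecY
    simp only [hq0] at h0
    have := mul_left_cancel₀ (show (5208:ℤ) ≠ 0 by norm_num)
      (show 5208 * (3 * (φ (((J:ℝ) + (K:ℝ)*Real.sqrt 3), x, y)).2.2) = 5208 * (x*B + 3*(y*D)) by
        linear_combination h0)
    exact this

lemma final_arith (A B C D P Q R S w : ℤ)
    (hA : (9:ℤ) ∣ 5 - A) (hB : (9:ℤ) ∣ B) (hP : (9:ℤ) ∣ 2 - P) (hQ : (9:ℤ) ∣ 3 - Q)
    (hR : (3:ℤ) ∣ 1 - R) (hS : (3:ℤ) ∣ 2 - S)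
    (hdetA : A*D - B*C = 1 ∨ A*D - B*C = -1)
    (hdetB : P*S - Q*R = 1 ∨ P*S - Q*R = -1)
    (hD : P*B + Q*D = 15 + 9*w) :
    P*B + Q*D ≠ A*Q + B*S := by
  obtain ⟨a, ha⟩ := hA
  obtain ⟨b, hb⟩ := hB
  obtain ⟨p, hp⟩ := hP
  obtain ⟨q, hq⟩ := hQ
  obtain ⟨rr, hrr⟩ := hR
  obtain ⟨s, hs⟩ := hS
  have hA' : A = 5 - 9*a := by omega
  have hP' : P = 2 - 9*p := by omega
  have hQ' : Q = 3 - 9*q := by omega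
  have hR' : R = 1 - 3*rr := by omega
  have hS' : S = 2 - 3*s := by omega
  subst hA' hP' hQ' hR' hS' hb
  -- step 1 : 3 ∣ D - 2
  have k1 : 18*b - 81*(p*b) + 3*D - 9*(q*D) = 15 + 9*w := by linear_combination hD
  have hd3 : (3:ℤ) ∣ D - 2 := by
    generalize p*b = u at k1
    generalize q*D = v at k1
    omega
  obtain ⟨d, hd⟩ := hd3
  have hD' : D = 2 + 3*d := by omega
  subst hD'
  -- step 2 : det of α forces 3 ∣ d
  have hd9 : (3:ℤ) ∣ d := by
    rcases hdetA with h | h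
    · have k2 : 10 + 15*d - 18*a - 27*(a*d) - 9*(b*C) = 1 := by linear_combination h
      generalize a*d = u at k2
      generalize b*C = v at k2
      omega
    · exfalso
      have k2 : 10 + 15*d - 18*a - 27*(a*d) - 9*(b*C) = -1 := by linear_combination h
      generalize a*d = u at k2
      generalize b*C = v at k2
      omega
  obtain ⟨d1, hd1⟩ := hd9
  subst hd1
  -- step 3 : det of β forces 3 ∣ s
  have hs9 : (3:ℤ) ∣ s := by
    rcases hdetB with h | h
    · have k3 : 1 - 6*s - 18*p + 27*(p*s) + 9*rr + 9*q - 27*(q*rr) = 1 := by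
        linear_combination h
      generalize p*s = u at k3
      generalize q*rr = v at k3
      omega
    · exfalso
      have k3 : 1 - 6*s - 18*p + 27*(p*s) + 9*rr + 9*q - 27*(q*rr) = -1 := by
        linear_combination h
      generalize p*s = u at k3
      generalize q*rr = v at k3
      omega
  obtain ⟨s1, hs1⟩ := hs9
  subst hs1
  -- final contradiction
  intro hcon
  have key : 81*(b*(s1-p)) + 27*a + 27*d1 + 27*q - 81*(q*a) - 81*(q*d1) = 9 := by
    linear_combination hcon
  generalize b*(s1-p) = u at key
  generalize q*a = v at key
  generalize q*d1 = z at key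
  omega

/-- If `α` and `β` are order automorphisms of `(E, E₊)` whose first components scale by
`5` and by `2 + √3` respectively, then `α ∘ β ≠ β ∘ α` (as maps of `E`). -/
theorem stmt_14 (α β : ℝ × ℤ × ℤ → ℝ × ℤ × ℤ) (hα : IsOrderAuto α) (hβ : IsOrderAuto β)
    (hα5 : ∀ p ∈ Eset, (α p).1 = 5 * p.1)
    (hβ23 : ∀ p ∈ Eset, (β p).1 = (2 + Real.sqrt 3) * p.1) :
    ∃ p ∈ Eset, α (β p) ≠ β (α p) := by
  have s3 : Real.sqrt 3 * Real.sqrt 3 = 3 := Real.mul_self_sqrt (by norm_num)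
  have p1mem : (((1:ℝ),(1:ℤ),(0:ℤ)) : ℝ×ℤ×ℤ) ∈ Eset :=
    mem_E 0 1 0 (by norm_num) (Int.ModEq.refl 1) (Int.ModEq.refl 0)
  have t0mem : ((Real.sqrt 3, (0:ℤ), (1:ℤ)) : ℝ×ℤ×ℤ) ∈ Eset :=
    mem_E 0 0 1 (by norm_num) (Int.ModEq.refl 0) (Int.ModEq.refl 1)
  -- extraction of "infinitesimal" elements
  have getN : ∀ u : ℝ×ℤ×ℤ, u ∈ Eset → u.1 = 0 → ∃ s t : ℤ, u = ((0:ℝ), 9*s, 3*t) := by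
    intro u hE h0
    have hd := decode 0 0 0 (r := u.1) (by rw [h0]; norm_num)
      (show ((u.1, u.2.1, u.2.2) : ℝ×ℤ×ℤ) ∈ Eset from hE)
    obtain ⟨s, hs⟩ := Int.modEq_zero_iff_dvd.mp hd.1
    obtain ⟨t, ht⟩ := Int.modEq_zero_iff_dvd.mp hd.2
    exact ⟨s, t, by rw [show u = (u.1, u.2.1, u.2.2) from rfl, h0, hs, ht]⟩
  -- matrix entries of α and β on the kernel lattice
  obtain ⟨A, B, hαn1⟩ := getN (α ((0:ℝ),(9:ℤ),(0:ℤ))) (hα.bijOn.mapsTo n1_mem)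
    (by rw [hα5 _ n1_mem]; norm_num)
  obtain ⟨C, D, hαn2⟩ := getN (α ((0:ℝ),(0:ℤ),(3:ℤ))) (hα.bijOn.mapsTo n2_mem)
    (by rw [hα5 _ n2_mem]; norm_num)
  obtain ⟨P, Q, hβn1⟩ := getN (β ((0:ℝ),(9:ℤ),(0:ℤ))) (hβ.bijOn.mapsTo n1_mem)
    (by rw [hβ23 _ n1_mem]; norm_num)
  obtain ⟨R, S, hβn2⟩ := getN (β ((0:ℝ),(0:ℤ),(3:ℤ))) (hβ.bijOn.mapsTo n2_mem)
    (by rw [hβ23 _ n2_mem]; norm_num)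
  -- evaluation on p1 = (1,1,0)
  have mα1 := master hα.addOn hαn1 hαn2 1 0 1 0 (r := (1:ℝ)) (by norm_num)
    (Int.ModEq.refl 1) (Int.ModEq.refl 0)
  have hA1 : (α ((1:ℝ),(1:ℤ),(0:ℤ))).2.1 = A := by linarith [mα1.1]
  have hB1 : 3 * (α ((1:ℝ),(1:ℤ),(0:ℤ))).2.2 = B := by linarith [mα1.2]
  have hαp1E : α ((1:ℝ),(1:ℤ),(0:ℤ)) ∈ Eset := hα.bijOn.mapsTo p1mem
  have hone : (α ((1:ℝ),(1:ℤ),(0:ℤ))).1 = 5 := by rw [hα5 _ p1mem]; norm_num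
  have dα1 := decode 0 5 0 (r := (α ((1:ℝ),(1:ℤ),(0:ℤ))).1) (by rw [hone]; norm_num)
    (show (((α ((1:ℝ),(1:ℤ),(0:ℤ))).1, (α ((1:ℝ),(1:ℤ),(0:ℤ))).2.1,
      (α ((1:ℝ),(1:ℤ),(0:ℤ))).2.2) : ℝ×ℤ×ℤ) ∈ Eset from hαp1E)
  have hAdvd : (9:ℤ) ∣ 5 - A := by
    have := dα1.1.dvd
    rwa [hA1] at this
  have hBdvd : (9:ℤ) ∣ B := by
    obtain ⟨m, hm⟩ := dα1.2.dvd
    exact ⟨-m, by omega⟩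
  -- evaluation of β on p1
  have mβ1 := master hβ.addOn hβn1 hβn2 1 0 1 0 (r := (1:ℝ)) (by norm_num)
    (Int.ModEq.refl 1) (Int.ModEq.refl 0)
  have hP1 : (β ((1:ℝ),(1:ℤ),(0:ℤ))).2.1 = P := by linarith [mβ1.1]
  have hQ1 : 3 * (β ((1:ℝ),(1:ℤ),(0:ℤ))).2.2 = Q := by linarith [mβ1.2]
  have hβp1E : β ((1:ℝ),(1:ℤ),(0:ℤ)) ∈ Eset := hβ.bijOn.mapsTo p1mem
  have hbone : (β ((1:ℝ),(1:ℤ),(0:ℤ))).1 = (2:ℝ) + (1:ℝ)*Real.sqrt 3 := by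
    rw [hβ23 _ p1mem]; ring
  have dβ1 := decode 0 2 1 (r := (β ((1:ℝ),(1:ℤ),(0:ℤ))).1)
    (by rw [hbone]; norm_num)
    (show (((β ((1:ℝ),(1:ℤ),(0:ℤ))).1, (β ((1:ℝ),(1:ℤ),(0:ℤ))).2.1,
      (β ((1:ℝ),(1:ℤ),(0:ℤ))).2.2) : ℝ×ℤ×ℤ) ∈ Eset from hβp1E)
  have hPdvd : (9:ℤ) ∣ 2 - P := by
    have := dβ1.1.dvd
    rwa [hP1] at this
  have hQdvd : (9:ℤ) ∣ 3 - Q := by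
    obtain ⟨m, hm⟩ := dβ1.2.dvd
    exact ⟨m, by omega⟩
  -- evaluation of β on t0 = (√3, 0, 1)
  have mβt0 := master hβ.addOn hβn1 hβn2 0 1 0 1 (r := Real.sqrt 3)
    (by norm_num) (Int.ModEq.refl 0) (Int.ModEq.refl 1)
  have hR1 : (β (Real.sqrt 3,(0:ℤ),(1:ℤ))).2.1 = 3*R := by linarith [mβt0.1]
  have hS1 : (β (Real.sqrt 3,(0:ℤ),(1:ℤ))).2.2 = S := by linarith [mβt0.2]
  have hβt0E : β (Real.sqrt 3,(0:ℤ),(1:ℤ)) ∈ Eset := hβ.bijOn.mapsTo t0mem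
  have hbt0 : (β (Real.sqrt 3,(0:ℤ),(1:ℤ))).1 = (3:ℝ) + (2:ℝ)*Real.sqrt 3 := by
    rw [hβ23 _ t0mem]; linear_combination s3
  have dβt0 := decode 0 3 2 (r := (β (Real.sqrt 3,(0:ℤ),(1:ℤ))).1)
    (by rw [hbt0]; norm_num)
    (show (((β (Real.sqrt 3,(0:ℤ),(1:ℤ))).1, (β (Real.sqrt 3,(0:ℤ),(1:ℤ))).2.1,
      (β (Real.sqrt 3,(0:ℤ),(1:ℤ))).2.2) : ℝ×ℤ×ℤ) ∈ Eset from hβt0E)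
  have hRdvd : (3:ℤ) ∣ 1 - R := by
    obtain ⟨m, hm⟩ := dβt0.1.dvd
    rw [hR1] at hm
    exact ⟨m, by omega⟩
  have hSdvd : (3:ℤ) ∣ 2 - S := by
    have := dβt0.2.dvd
    rwa [hS1] at this
  -- evaluation of α ∘ β on p1
  have mαβ := master hα.addOn hαn1 hαn2 2 1 ((β ((1:ℝ),(1:ℤ),(0:ℤ))).2.1)
    ((β ((1:ℝ),(1:ℤ),(0:ℤ))).2.2) (r := (β ((1:ℝ),(1:ℤ),(0:ℤ))).1)
    (by rw [hbone]; norm_num) dβ1.1 dβ1.2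
  have m2 : 3 * (α (β ((1:ℝ),(1:ℤ),(0:ℤ)))).2.2
      = (β ((1:ℝ),(1:ℤ),(0:ℤ))).2.1 * B + 3*((β ((1:ℝ),(1:ℤ),(0:ℤ))).2.2 * D) := mαβ.2
  have hcomp1 : 3 * (α (β ((1:ℝ),(1:ℤ),(0:ℤ)))).2.2 = P*B + Q*D := by
    linear_combination m2 + B*hP1 + D*hQ1
  -- evaluation of β ∘ α on p1
  have mβα := master hβ.addOn hβn1 hβn2 5 0 ((α ((1:ℝ),(1:ℤ),(0:ℤ))).2.1)
    ((α ((1:ℝ),(1:ℤ),(0:ℤ))).2.2) (r := (α ((1:ℝ),(1:ℤ),(0:ℤ))).1)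
    (by rw [hone]; norm_num) dα1.1 dα1.2
  have m2' : 3 * (β (α ((1:ℝ),(1:ℤ),(0:ℤ)))).2.2
      = (α ((1:ℝ),(1:ℤ),(0:ℤ))).2.1 * Q + 3*((α ((1:ℝ),(1:ℤ),(0:ℤ))).2.2 * S) := mβα.2
  have hcomp2 : 3 * (β (α ((1:ℝ),(1:ℤ),(0:ℤ)))).2.2 = A*Q + B*S := by
    linear_combination m2' + Q*hA1 + S*hB1
  -- the congruence mod 3 of the third coordinate of α (β p1)
  have hαβE : α (β ((1:ℝ),(1:ℤ),(0:ℤ))) ∈ Eset := hα.bijOn.mapsTo hβp1E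
  have hfst : (α (β ((1:ℝ),(1:ℤ),(0:ℤ)))).1 = (10:ℝ) + (5:ℝ)*Real.sqrt 3 := by
    rw [hα5 _ hβp1E, hbone]; ring
  have dαβ := decode 0 10 5 (r := (α (β ((1:ℝ),(1:ℤ),(0:ℤ)))).1)
    (by rw [hfst]; norm_num)
    (show (((α (β ((1:ℝ),(1:ℤ),(0:ℤ)))).1, (α (β ((1:ℝ),(1:ℤ),(0:ℤ)))).2.1,
      (α (β ((1:ℝ),(1:ℤ),(0:ℤ)))).2.2) : ℝ×ℤ×ℤ) ∈ Eset from hαβE)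
  obtain ⟨w0, hw0⟩ := dαβ.2.dvd
  have hDeq : P*B + Q*D = 15 + 9*(-w0 ) := by
    rw [← hcomp1]
    omega
  -- determinants are ±1
  have detcalc : ∀ (φ : ℝ×ℤ×ℤ → ℝ×ℤ×ℤ)
      (_ : ∀ p ∈ Eset, ∀ q ∈ Eset, φ (p + q) = φ p + φ q)
      (A' B' C' D' : ℤ), φ ((0:ℝ),(9:ℤ),(0:ℤ)) = ((0:ℝ), 9*A', 3*B') →
      φ ((0:ℝ),(0:ℤ),(3:ℤ)) = ((0:ℝ), 9*C', 3*D') →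
      ∀ s t : ℤ, φ ((0:ℝ), 9*s, 3*t) = ((0:ℝ), 9*(s*A'+t*C'), 3*(s*B'+t*D')) := by
    intro φ hadd A' B' C' D' h1 h2 s t
    have hdecomp : (((0:ℝ), 9*s, 3*t) : ℝ×ℤ×ℤ)
        = s • (((0:ℝ),(9:ℤ),(0:ℤ)) : ℝ×ℤ×ℤ) + t • (((0:ℝ),(0:ℤ),(3:ℤ)) : ℝ×ℤ×ℤ) := by
      refine Prod.ext ?_ (Prod.ext ?_ ?_) <;>
        simp [Prod.smul_fst, Prod.smul_snd, smul_eq_mul] <;> ring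
    rw [hdecomp, hadd _ (zsmul_mem_E n1_mem s) _ (zsmul_mem_E n2_mem t),
      phi_zsmul hadd s n1_mem, phi_zsmul hadd t n2_mem, h1, h2]
    refine Prod.ext ?_ (Prod.ext ?_ ?_) <;>
      simp [Prod.smul_fst, Prod.smul_snd, smul_eq_mul] <;> ring
  have detpm : ∀ (φ : ℝ×ℤ×ℤ → ℝ×ℤ×ℤ) (L : ℝ), L ≠ 0 → IsOrderAuto φ →
      (∀ p ∈ Eset, (φ p).1 = L * p.1) →
      ∀ (A' B' C' D' : ℤ), φ ((0:ℝ),(9:ℤ),(0:ℤ)) = ((0:ℝ), 9*A', 3*B') →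
      φ ((0:ℝ),(0:ℤ),(3:ℤ)) = ((0:ℝ), 9*C', 3*D') →
      A'*D' - B'*C' = 1 ∨ A'*D' - B'*C' = -1 := by
    intro φ L hL hφ hscale A' B' C' D' h1 h2
    have pre : ∀ w : ℝ×ℤ×ℤ, w ∈ Eset → w.1 = 0 → ∃ s t : ℤ, φ ((0:ℝ), 9*s, 3*t) = w := by
      intro w hw hw0
      obtain ⟨u, huE, hu⟩ := hφ.bijOn.surjOn hw
      have hu1 : u.1 = 0 := by
        have h := hscale u huE
        rw [hu, hw0] at h
        rcases mul_eq_zero.mp h.symm with h' | h'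
        · exact absurd h' hL
        · exact h'
      obtain ⟨s, t, hst⟩ := getN u huE hu1
      exact ⟨s, t, by rw [← hst]; exact hu⟩
    obtain ⟨s, t, h01⟩ := pre ((0:ℝ),(9:ℤ),(0:ℤ)) n1_mem rfl
    obtain ⟨s', t', h02⟩ := pre ((0:ℝ),(0:ℤ),(3:ℤ)) n2_mem rfl
    rw [detcalc φ hφ.addOn A' B' C' D' h1 h2 s t] at h01
    rw [detcalc φ hφ.addOn A' B' C' D' h1 h2 s' t'] at h02
    have e1 : 9*(s*A'+t*C') = 9 := congrArg (fun z : ℝ×ℤ×ℤ => z.2.1) h01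
    have e2 : 3*(s*B'+t*D') = 0 := congrArg (fun z : ℝ×ℤ×ℤ => z.2.2) h01
    have e3 : 9*(s'*A'+t'*C') = 0 := congrArg (fun z : ℝ×ℤ×ℤ => z.2.1) h02
    have e4 : 3*(s'*B'+t'*D') = 3 := congrArg (fun z : ℝ×ℤ×ℤ => z.2.2) h02
    have f1 : s*A'+t*C' = 1 := by linarith
    have f2 : s*B'+t*D' = 0 := by linarith
    have f3 : s'*A'+t'*C' = 0 := by linarith
    have f4 : s'*B'+t'*D' = 1 := by linarith
    have key : (A'*D' - B'*C') * (s*t' - t*s') = 1 := by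
      have hprod : (s*A'+t*C')*(s'*B'+t'*D') - (s*B'+t*D')*(s'*A'+t'*C') = 1 := by
        rw [f1, f2, f3, f4]; ring
      linear_combination hprod
    exact Int.isUnit_iff.mp (IsUnit.of_mul_eq_one _ key)
  have hdetA := detpm α 5 (by norm_num) hα hα5 A B C D hαn1 hαn2
  have hdetB := detpm β (2+Real.sqrt 3) (by positivity) hβ hβ23 P Q R S hβn1 hβn2
  -- conclusion
  refine ⟨((1:ℝ),(1:ℤ),(0:ℤ)), p1mem, ?_⟩
  intro hcon
  have h3 : 3*(α (β ((1:ℝ),(1:ℤ),(0:ℤ)))).2.2 = 3*(β (α ((1:ℝ),(1:ℤ),(0:ℤ)))).2.2 := by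
    rw [hcon]
  exact final_arith A B C D P Q R S (-w0) hAdvd hBdvd hPdvd hQdvd hRdvd hSdvd hdetA hdetB hDeq
    (by linear_combination hcomp1.symm + h3 + hcomp2)
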